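/- arXiv:2601.18041 — 2 statements merged into one kernel-verified Lean document; each statement's English description precedes it below -/
import Mathlib

section
/- Resolvent of a densely defined closed operator via Halmos dilation: let H be a complex Hilbert space, a ∈ B(H) a pure contraction (‖ax‖ < ‖x‖ for all x ≠ 0), t = Γ(a) the associated densely defined closed operator with t(1−a*a)^{1/2} = a, and π(t) = [[−a*, (1−a*a)^{1/2}],[(1−aa*)^{1/2}, a]]/~ ∈ Gr_1(B(H)). Let B ⊂ B(H) be a unital subalgebra and β ∈ B. Then β̃ = [[0,1],[1,β]]/~ belongs to ρ̃(π(t);B) if and only if β(1−a*a)^{1/2} − a is invertible in B(H), and in this case β − t has bounded inverse (β−t)^{-1} = R̃(π(t);B)(β̃) = (1−a*a)^{1/2}(β(1−a*a)^{1/2} − a)^{-1}. -/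
open Matrix

/-- `n × n` matrices over `A`. -/
abbrev Mat (A : Type) (n : ℕ) : Type := Matrix (Fin n) (Fin n) A

/-- `m × m` block matrices with `n × n` blocks over `A`, i.e. `M_m(M_n(A))`. -/
abbrev BMat (A : Type) (m n : ℕ) : Type := Matrix (Fin m) (Fin m) (Mat A n)

section NC

variable {R : Type} [CommRing R] {A : Type} [Ring A]

/-- Membership in the subgroup `H^{(d;m)}_n(A)` of invertible block lower-triangular
matrices `[[X,0],[Y,Z]]` with `X ∈ GL_{m-d}`, `Z ∈ GL_d`. -/
def memH (m d n : ℕ) (hd : d ≤ m) (Γ : BMat A m n) : Prop :=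
  IsUnit Γ ∧
  (∀ i j : Fin m, (i : ℕ) < m - d → m - d ≤ (j : ℕ) → Γ i j = 0) ∧
  IsUnit (Matrix.of fun i j : Fin (m - d) =>
    Γ ⟨(i : ℕ), lt_of_lt_of_le i.isLt (Nat.sub_le m d)⟩
      ⟨(j : ℕ), lt_of_lt_of_le j.isLt (Nat.sub_le m d)⟩) ∧
  IsUnit (Matrix.of fun i j : Fin d =>
    Γ ⟨m - d + (i : ℕ), by have := i.isLt; omega⟩
      ⟨m - d + (j : ℕ), by have := j.isLt; omega⟩)

/-- The relation `X ~ Y` iff `X = Y Γ` for some `Γ ∈ H^{(d;m)}_n(A)`. -/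
def grel (m d n : ℕ) (hd : d ≤ m) (X Y : BMat A m n) : Prop :=
  ∃ Γ : BMat A m n, memH m d n hd Γ ∧ X = Y * Γ

/-- Direct sum of square matrices. -/
def dsumMat {n n' : ℕ} (X : Mat A n) (Y : Mat A n') : Mat A (n + n') :=
  Matrix.reindex finSumFinEquiv finSumFinEquiv (Matrix.fromBlocks X 0 0 Y)

/-- Entrywise block direct sum `X ⊕̃ Y` of elements of `M_m(M_n(A))`, `M_m(M_{n'}(A))`. -/
def dsum {m n n' : ℕ} (X : BMat A m n) (Y : BMat A m n') : BMat A m (n + n') :=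
  Matrix.of fun i j => dsumMat (X i j) (Y i j)

/-- Direct sum of square matrices with entries in a module. -/
def dsumW {W : Type} [AddCommMonoid W] {n n' : ℕ}
    (X : Matrix (Fin n) (Fin n) W) (Y : Matrix (Fin n') (Fin n') W) :
    Matrix (Fin (n + n')) (Fin (n + n')) W :=
  Matrix.reindex finSumFinEquiv finSumFinEquiv (Matrix.fromBlocks X 0 0 Y)

/-- Block upper triangular matrix `[[P, H],[0, Q]]`. -/
def triW {W : Type} [AddCommMonoid W] {n n' : ℕ}
    (P : Matrix (Fin n) (Fin n) W) (H : Matrix (Fin n) (Fin n') W)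
    (Q : Matrix (Fin n') (Fin n') W) :
    Matrix (Fin (n + n')) (Fin (n + n')) W :=
  Matrix.reindex finSumFinEquiv finSumFinEquiv (Matrix.fromBlocks P H 0 Q)

/-- The unipotent upper triangular matrix `[[I, T],[0, I]]` over `R`. -/
def uptri (R : Type) [CommRing R] {p q : ℕ} (T : Matrix (Fin p) (Fin q) R) :
    Matrix (Fin (p + q)) (Fin (p + q)) R :=
  Matrix.reindex finSumFinEquiv finSumFinEquiv (Matrix.fromBlocks 1 T 0 1)

/-- Left multiplication of a representative by `s^{⊕ m}` for a scalar matrix `s` over `R`: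
the similarity action on the nc Grassmannian. -/
def simAct [Algebra R A] {m N : ℕ} (s : Matrix (Fin N) (Fin N) R) (X : BMat A m N) :
    BMat A m N :=
  Matrix.of fun i j => s.map (algebraMap R A) * X i j

/-- Multiplication of a matrix over an `R`-module `W` by a matrix over `R` on the left. -/
def rmulL {W : Type} [AddCommMonoid W] [Module R W] {p q r : ℕ}
    (s : Matrix (Fin p) (Fin q) R) (X : Matrix (Fin q) (Fin r) W) :
    Matrix (Fin p) (Fin r) W :=
  Matrix.of fun i j => ∑ k, s i k • X k j

/-- Multiplication of a matrix over an `R`-module `W` by a matrix over `R` on the right. -/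
def rmulR {W : Type} [AddCommMonoid W] [Module R W] {p q r : ℕ}
    (X : Matrix (Fin p) (Fin q) W) (s : Matrix (Fin q) (Fin r) R) :
    Matrix (Fin p) (Fin r) W :=
  Matrix.of fun i j => ∑ k, s k j • X i k

/-- Vertical concatenation of matrices. -/
def vcat {α : Type} {p p' q : ℕ} (X : Matrix (Fin p) (Fin q) α)
    (Y : Matrix (Fin p') (Fin q) α) : Matrix (Fin (p + p')) (Fin q) α :=
  Matrix.of fun i j =>
    if h : (i : ℕ) < p then X ⟨(i : ℕ), h⟩ j
    else Y ⟨(i : ℕ) - p, by have := i.isLt; omega⟩ j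

/-- The affine embedding `X ↦ [[0, I],[I, X]]` in the case `(d;m) = (1;2)`. -/
def affEmb {n : ℕ} (X : Mat A n) : BMat A 2 n := !![0, 1; 1, X]

/-- The matrix `[[0, X],[0, 0]] ∈ M_{n+n'}(A)` with `X ∈ M_{n,n'}(A)` in the upper right
corner. -/
def cornerMat {n n' : ℕ} (X : Matrix (Fin n) (Fin n') A) : Mat A (n + n') :=
  Matrix.reindex finSumFinEquiv finSumFinEquiv (Matrix.fromBlocks 0 X 0 0)

/-- The representative `(P;Q)_{u,v}(X)` of the element `(σ;σ')_{u,v}(X)`: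
`P ⊕̃ Q + Σ_{j=1}^d [[0, X Q_{v, m-d+j}],[0,0]] ⊗ e^{(m)}_{d+u, m-d+j}`. -/
def ins {m d n n' : ℕ} (hd : d ≤ m) (u : Fin (m - d)) (v : Fin d)
    (P : BMat A m n) (Q : BMat A m n') (X : Matrix (Fin n) (Fin n') A) :
    BMat A m (n + n') :=
  dsum P Q + Matrix.of fun (i j : Fin m) =>
    if (i : ℕ) = d + (u : ℕ) ∧ m - d ≤ (j : ℕ) then
      cornerMat (X * Q ⟨(v : ℕ), lt_of_lt_of_le v.isLt hd⟩ j)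
    else 0

/-- The matrix unit `e^{(md,d)}_{u,v} ⊗ X`. -/
def eMat {md d : ℕ} {n : ℕ} (u : Fin md) (v : Fin d) (X : Mat A n) :
    Matrix (Fin md) (Fin d) (Mat A n) :=
  Matrix.of fun i j => if i = u ∧ j = v then X else 0

/-- The block matrix `[[I_d ⊗ I_n, 0],[-Y, I_{m-d} ⊗ I_n]]` used to define `σ(Y)`. -/
def shiftMat {m d n : ℕ} (hd : d ≤ m) (Y : Matrix (Fin (m - d)) (Fin d) (Mat A n)) :
    BMat A m n :=
  Matrix.of fun i j =>
    (if i = j then (1 : Mat A n) else 0) +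
    (if h : d ≤ (i : ℕ) ∧ (j : ℕ) < d then
      -Y ⟨(i : ℕ) - d, by have := i.isLt; omega⟩ ⟨(j : ℕ), h.2⟩
    else 0)

/-- A family `C` of sets of representatives is an nc set over `Gr^{(d;m)}(A)`:
it consists of invertible matrices, is saturated under the relation `~`
(i.e. it is a set of equivalence classes), and is closed under direct sums. -/
def IsNCSetCarrier {m d : ℕ} (hd : d ≤ m) (C : ∀ n, Set (BMat A m n)) : Prop :=
  (∀ n, ∀ a ∈ C n, IsUnit a) ∧
  (∀ n, ∀ a b : BMat A m n, grel m d n hd a b → (a ∈ C n ↔ b ∈ C n)) ∧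
  (∀ n n', ∀ a ∈ C n, ∀ b ∈ C n', dsum a b ∈ C (n + n'))

/-- `f` is an nc function on the nc set (with carrier) `C` over `Gr^{(d;m)}(A)`:
it descends to equivalence classes, preserves direct sums, and is similarity preserving. -/
def IsNCFun (R : Type) [CommRing R] [Algebra R A] {W : Type} [AddCommMonoid W] [Module R W]
    {m d : ℕ} (hd : d ≤ m) (C : ∀ n, Set (BMat A m n))
    (f : ∀ n, BMat A m n → Matrix (Fin n) (Fin n) W) : Prop :=
  (∀ n, ∀ a ∈ C n, ∀ b ∈ C n, grel m d n hd a b → f n a = f n b) ∧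
  (∀ n n', ∀ a ∈ C n, ∀ b ∈ C n', f (n + n') (dsum a b) = dsumW (f n a) (f n' b)) ∧
  (∀ n (s : (Matrix (Fin n) (Fin n) R)ˣ), ∀ a ∈ C n,
    simAct (s : Matrix (Fin n) (Fin n) R) a ∈ C n →
    f n (simAct (s : Matrix (Fin n) (Fin n) R) a) =
      rmulR (rmulL (s : Matrix (Fin n) (Fin n) R) (f n a))
        ((s⁻¹ : (Matrix (Fin n) (Fin n) R)ˣ) : Matrix (Fin n) (Fin n) R))

/-- `(u,v)`-admissibility of an nc set. -/
def Admissible (R : Type) [CommRing R] [Algebra R A] {m d : ℕ} (hd : d ≤ m)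
    (C : ∀ n, Set (BMat A m n)) (u : Fin (m - d)) (v : Fin d) : Prop :=
  ∀ n n' (a : BMat A m n) (b : BMat A m n') (X : Matrix (Fin n) (Fin n') A),
    a ∈ C n → b ∈ C n' →
    ∃ r : Rˣ, ins hd u v a b ((r : R) • X) ∈ C (n + n')

/-- The similarity-invariant envelope of an nc set. -/
def envC (R : Type) [CommRing R] [Algebra R A] {m d : ℕ} (hd : d ≤ m)
    (C : ∀ n, Set (BMat A m n)) : ∀ n, Set (BMat A m n) :=
  fun n => {x | ∃ (s : (Matrix (Fin n) (Fin n) R)ˣ) (a : BMat A m n),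
    a ∈ C n ∧ grel m d n hd x (simAct (s : Matrix (Fin n) (Fin n) R) a)}

end NC

section Res

variable {R : Type} [CommRing R] {A : Type} [Ring A] [Algebra R A]

/-- Entrywise inclusion `M_m(M_n(B)) → M_m(M_n(A))` for a subalgebra `B ⊆ A`. -/
def bmap (D : Subalgebra R A) {m n : ℕ} (b : BMat (↥D) m n) : BMat A m n :=
  Matrix.of fun i j => (b i j).map (fun x => (x : A))

/-- Entrywise inclusion for rectangular matrices over a subalgebra. -/
def rcmap (D : Subalgebra R A) {n n' : ℕ} (X : Matrix (Fin n) (Fin n') ↥D) :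
    Matrix (Fin n) (Fin n') A :=
  X.map (fun x => (x : A))

/-- `X` is invertible in `M_m(M_n(B))` for the subalgebra `B = D ⊆ A`. -/
def invIn (D : Subalgebra R A) {m n : ℕ} (X : BMat A m n) : Prop :=
  (∀ i j k l, X i j k l ∈ D) ∧
  ∃ Y : BMat A m n, (∀ i j k l, Y i j k l ∈ D) ∧ X * Y = 1 ∧ Y * X = 1

/-- The amplification `a^{⊕̃ n}` of an element `a ∈ M_m(A) = M_m(M_1(A))`. -/
def ampl {m : ℕ} (a : BMat A m 1) (n : ℕ) : BMat A m n :=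
  Matrix.of fun i j => Matrix.diagonal (fun _ => a i j 0 0)

/-- The matrix `r^{(d;m)}(P;Q)`: first `m-d` block columns are the last `m-d` block
columns of `P`, last `d` block columns are the last `d` block columns of `Q`. -/
def rmat {m d n : ℕ} (hd : d ≤ m) (P Q : BMat A m n) : BMat A m n :=
  Matrix.of fun i j =>
    if h : (j : ℕ) < m - d then P i ⟨d + (j : ℕ), by omega⟩ else Q i j

/-- The value `[B_{v,m-d+1},…,B_{v,m}] ⋅ ζ_u` of the `(d;m)`-Grassmannian resolvent,
where `ζ_u` is the `u`-th bottom block column of the inverse `Rinv` of an `r`-matrix. -/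
def resVal {m d n : ℕ} (hd : d ≤ m) (v : Fin d) (u : Fin (m - d))
    (Bm Rinv : BMat A m n) : Mat A n :=
  ∑ j : Fin d,
    Bm ⟨(v : ℕ), lt_of_lt_of_le v.isLt hd⟩ ⟨m - d + (j : ℕ), by have := j.isLt; omega⟩ *
    Rinv ⟨m - d + (j : ℕ), by have := j.isLt; omega⟩ ⟨d + (u : ℕ), by have := u.isLt; omega⟩

/-- Membership in the `(d;m)`-Grassmannian `B`-resolvent set of `π` (represented by `p`):
`b` represents an element of `Gr^{(d;m)}_n(B)` such that `π^{⊕n}` and `b` are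
transversal in `A`. -/
def ResMem {m d : ℕ} (hd : d ≤ m) (p : BMat A m 1) (D : Subalgebra R A) {n : ℕ}
    (b : BMat (↥D) m n) : Prop :=
  IsUnit b ∧ IsUnit (rmat hd (ampl p n) (bmap D b))

end Res

section Aux
variable {S : Type} [Ring S]

def toM {m : ℕ} : BMat S m 1 ≃+* Matrix (Fin m) (Fin m) S where
  toFun X := Matrix.of fun i j => X i j 0 0
  invFun Y := Matrix.of fun i j => Matrix.of fun _ _ => Y i j
  left_inv X := by
    ext i j k l
    obtain rfl : k = 0 := Subsingleton.elim k 0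
    obtain rfl : l = 0 := Subsingleton.elim l 0
    rfl
  right_inv Y := rfl
  map_mul' X Y := by
    ext i j
    simp [Matrix.mul_apply, Matrix.sum_apply, Fin.sum_univ_one]
  map_add' X Y := by
    ext i j
    simp

lemma toM_apply {m : ℕ} (X : BMat S m 1) (i j : Fin m) : toM X i j = X i j 0 0 := rfl

lemma isUnit_toM {m : ℕ} (X : BMat S m 1) : IsUnit (toM X) ↔ IsUnit X := by
  constructor
  · intro h
    have := h.map (toM (S := S) (m := m)).symm.toRingHom
    simpa using this
  · intro h
    exact h.map (toM (S := S) (m := m)).toRingHom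

lemma unit_L1 (x y : S) : IsUnit (!![(0:S),1;x,y]) ↔ IsUnit x := by
  constructor
  · rintro ⟨u, hu⟩
    have h1 : !![(0:S),1;x,y] * (u⁻¹).val = 1 := by
      rw [← hu]; exact u.mul_inv
    have h2 : (u⁻¹).val * !![(0:S),1;x,y] = 1 := by
      rw [← hu]; exact u.inv_mul
    set N := (u⁻¹).val with hN
    -- entry extraction
    have e00 : N 1 0 = 1 := by
      have := congrFun (congrFun h1 0) 0
      simpa [Matrix.mul_apply, Fin.sum_univ_two] using this
    have e01 : N 1 1 = 0 := by
      have := congrFun (congrFun h1 0) 1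
      simpa [Matrix.mul_apply, Fin.sum_univ_two] using this
    have e11 : x * N 0 1 + y * N 1 1 = 1 := by
      have := congrFun (congrFun h1 1) 1
      simpa [Matrix.mul_apply, Fin.sum_univ_two] using this
    have e2 : N 0 1 * x = 1 := by
      have := congrFun (congrFun h2 0) 0
      simpa [Matrix.mul_apply, Fin.sum_univ_two] using this
    rw [e01, mul_zero, add_zero] at e11
    exact isUnit_iff_exists.mpr ⟨N 0 1, e11, e2⟩
  · rintro h
    obtain ⟨q, hq1, hq2⟩ := isUnit_iff_exists.mp h
    refine isUnit_iff_exists.mpr ⟨!![-(q*y), q; 1, 0], ?_, ?_⟩ <;>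
      · ext i j
        fin_cases i <;> fin_cases j <;>
          simp [Matrix.mul_apply, Fin.sum_univ_two, ← mul_assoc, hq1, hq2]

lemma decompM (b' a' y : S) :
    (!![b',1;a',y] : Matrix (Fin 2) (Fin 2) S) = !![0,1;a'-y*b',y] * !![1,0;b',1] := by
  ext i j
  fin_cases i <;> fin_cases j <;> simp [Matrix.mul_apply, Fin.sum_univ_two, sub_mul]

lemma unit_main (b' a' y : S) :
    IsUnit (!![b',1;a',y] : Matrix (Fin 2) (Fin 2) S) ↔ IsUnit (y*b' - a') := by
  have hV : IsUnit (!![(1:S),0;b',1]) := by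
    refine isUnit_iff_exists.mpr ⟨!![1,0;-b',1], ?_, ?_⟩ <;>
      · ext i j
        fin_cases i <;> fin_cases j <;> simp [Matrix.mul_apply, Fin.sum_univ_two]
  rw [decompM, ← hV.unit_spec, Units.isUnit_mul_units, unit_L1]
  constructor
  · intro h; have := h.neg; rwa [neg_sub] at this
  · intro h; have := h.neg; rwa [neg_sub] at this

lemma inv_explicit (b' a' y w : S) (h1 : (y*b'-a')*w = 1) :
    (!![b',1;a',y] : Matrix (Fin 2) (Fin 2) S) * !![w*y, -w; 1 - b'*(w*y), b'*w] = 1 := by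
  have key : y*(b'*(w*y)) - a'*(w*y) = y := by
    calc y*(b'*(w*y)) - a'*(w*y) = ((y*b'-a')*w)*y := by noncomm_ring
    _ = y := by rw [h1, one_mul]
  have key2 : y*(b'*w) - a'*w = 1 := by
    calc y*(b'*w) - a'*w = (y*b'-a')*w := by noncomm_ring
    _ = 1 := h1
  ext i j
  fin_cases i <;> fin_cases j <;>
    simp [Matrix.mul_apply, Fin.sum_univ_two]
  · rw [show a' * (w * y) + y * (1 - b' * (w * y)) = -(y*(b'*(w*y)) - a'*(w*y)) + y from by
      noncomm_ring, key, neg_add_cancel]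
  · rw [show -(a' * w) + y * (b' * w) = y*(b'*w) - a'*w from by noncomm_ring, key2]

end Aux


/-- The representative of the Halmos unitary dilation `[[a₁₁,a₁₂],[a₂₁,a₂₂]]`
as an element of `M_2(M_1(A))`. -/

def rep2 {A : Type} [Ring A] (a11 a12 a21 a22 : A) : BMat A 2 1 :=
  Matrix.of fun i j => Matrix.of fun _ _ => !![a11, a12; a21, a22] i j

/-- A scalar as a `1 × 1` matrix. -/
def constMat {S : Type} (x : S) : Mat S 1 := Matrix.of fun _ _ => x

/-- resolvent of a densely defined closed operator via the Halmos
dilation: `β̃ ∈ ρ̃(π(t);B)` iff `β(1-a*a)^{1/2} - a` is invertible in `B(H)`, and in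
that case `β - t` has the bounded inverse `(1-a*a)^{1/2}(β(1-a*a)^{1/2} - a)⁻¹`,
which equals the Grassmannian resolvent `R̃(π(t);B)(β̃)`. -/
theorem halmos_resolvent {H : Type} [NormedAddCommGroup H] [InnerProductSpace ℂ H]
    [CompleteSpace H]
    (a b c : H →L[ℂ] H)
    (ha : ∀ x : H, x ≠ 0 → ‖a x‖ < ‖x‖)
    (hbpos : b.IsPositive) (hb2 : b * b = 1 - ContinuousLinearMap.adjoint a * a)
    (hcpos : c.IsPositive) (hc2 : c * c = 1 - a * ContinuousLinearMap.adjoint a)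
    (t : H →ₗ.[ℂ] H)
    (hdom : t.domain = LinearMap.range (b : H →ₗ[ℂ] H))
    (hdense : Dense (t.domain : Set H))
    (ht : ∀ (x : H) (hx : b x ∈ t.domain), t ⟨b x, hx⟩ = a x)
    (D : Subalgebra ℂ (H →L[ℂ] H)) (β : ↥D) :
    (ResMem (show (1:ℕ) ≤ 2 by norm_num)
        (rep2 (-(ContinuousLinearMap.adjoint a)) b c a) D (affEmb (constMat β)) ↔
      IsUnit ((β : H →L[ℂ] H) * b - a)) ∧
    (∀ w : H →L[ℂ] H,
      ((β : H →L[ℂ] H) * b - a) * w = 1 → w * ((β : H →L[ℂ] H) * b - a) = 1 →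
      (∀ x : H, ∃ hx : (b * w) x ∈ t.domain,
        (β : H →L[ℂ] H) ((b * w) x) - t ⟨(b * w) x, hx⟩ = x) ∧
      (∀ y (hy : y ∈ t.domain), (b * w) ((β : H →L[ℂ] H) y - t ⟨y, hy⟩) = y) ∧
      (∀ Rinv : BMat (H →L[ℂ] H) 2 1,
        rmat (show (1:ℕ) ≤ 2 by norm_num)
            (ampl (rep2 (-(ContinuousLinearMap.adjoint a)) b c a) 1)
            (bmap D (affEmb (constMat β))) * Rinv = 1 →
        Rinv * rmat (show (1:ℕ) ≤ 2 by norm_num)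
            (ampl (rep2 (-(ContinuousLinearMap.adjoint a)) b c a) 1)
            (bmap D (affEmb (constMat β))) = 1 →
        resVal (show (1:ℕ) ≤ 2 by norm_num) (0 : Fin 1) (⟨0, by norm_num⟩ : Fin (2 - 1))
            (bmap D (affEmb (constMat β))) Rinv = constMat (b * w))) := by
  classical
  have hd : (1:ℕ) ≤ 2 := by norm_num
  have stepA : toM (rmat (show (1:ℕ) ≤ 2 by norm_num) (ampl (rep2 (-(ContinuousLinearMap.adjoint a)) b c a) 1) (bmap D (affEmb (constMat β)))) = !![b, 1; a, (β : H →L[ℂ] H)] := by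
    ext i j : 1
    fin_cases i <;> fin_cases j <;>
      simp [toM_apply, rmat, ampl, rep2, bmap, affEmb, constMat, Matrix.one_apply]
  have stepB : toM (affEmb (constMat β)) = !![(0:↥D),1;1,β] := by
    ext i j : 1
    fin_cases i <;> fin_cases j <;>
      simp [toM_apply, affEmb, constMat, Matrix.one_apply]
  have stepC : IsUnit (affEmb (constMat β) : BMat ↥D 2 1) := by
    rw [← isUnit_toM, stepB]
    have h1 : IsUnit (!![(0:↥D),1;1,β]) := by
      rw [unit_L1]; exact isUnit_one
    exact h1
  constructor
  · constructor
    · rintro ⟨_, hru⟩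
      rwa [← isUnit_toM, stepA, unit_main] at hru
    · intro h
      refine ⟨stepC, ?_⟩
      rwa [← isUnit_toM, stepA, unit_main]
  · intro w hw1 hw2
    refine ⟨?_, ?_, ?_⟩
    · intro x
      have hx : (b * w) x ∈ t.domain := by
        rw [hdom]
        exact ⟨w x, rfl⟩
      refine ⟨hx, ?_⟩
      have h1 : t ⟨(b * w) x, hx⟩ = a (w x) := ht (w x) hx
      rw [h1]
      have := congrArg (fun f : H →L[ℂ] H => f x) hw1
      simpa [ContinuousLinearMap.mul_apply, ContinuousLinearMap.sub_apply] using this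
    · intro y hy
      have hy' : y ∈ LinearMap.range (b : H →ₗ[ℂ] H) := hdom ▸ hy
      obtain ⟨z, hz⟩ := hy'
      have hz' : b z = y := hz
      subst hz'
      have h1 : t ⟨b z, hy⟩ = a z := ht z hy
      rw [h1]
      have h2 := congrArg (fun f : H →L[ℂ] H => f z) hw2
      simp only [ContinuousLinearMap.mul_apply, ContinuousLinearMap.sub_apply,
        ContinuousLinearMap.one_apply] at h2 ⊢
      rw [show (β : H →L[ℂ] H) (b z) - a z = ((β : H →L[ℂ] H) * b - a) z from by
        simp [ContinuousLinearMap.mul_apply, ContinuousLinearMap.sub_apply]]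
      rw [show w (((β : H →L[ℂ] H) * b - a) z) = z from by
        simpa [ContinuousLinearMap.mul_apply] using h2]
    · intro Rinv hR1 hR2
      let E : BMat (H →L[ℂ] H) 2 1 := Matrix.of fun i j => Matrix.of fun _ _ =>
        (!![w * (β : H →L[ℂ] H), -w; 1 - b * (w * (β : H →L[ℂ] H)), b * w] i j)
      have htoME : toM E = !![w * (β : H →L[ℂ] H), -w; 1 - b * (w * (β : H →L[ℂ] H)), b * w] := rfl
      have hrE : (rmat (show (1:ℕ) ≤ 2 by norm_num) (ampl (rep2 (-(ContinuousLinearMap.adjoint a)) b c a) 1) (bmap D (affEmb (constMat β)))) * E = 1 := by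
        apply toM.injective
        rw [_root_.map_mul, _root_.map_one, stepA, htoME]
        exact inv_explicit b a (β : H →L[ℂ] H) w hw1
      have hRE : Rinv = E := by
        calc Rinv = Rinv * ((rmat (show (1:ℕ) ≤ 2 by norm_num) (ampl (rep2 (-(ContinuousLinearMap.adjoint a)) b c a) 1) (bmap D (affEmb (constMat β)))) * E) := by rw [hrE, mul_one]
        _ = (Rinv * (rmat (show (1:ℕ) ≤ 2 by norm_num) (ampl (rep2 (-(ContinuousLinearMap.adjoint a)) b c a) 1) (bmap D (affEmb (constMat β))))) * E := by rw [mul_assoc]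
        _ = E := by rw [hR2, one_mul]
      subst hRE
      ext k l
      obtain rfl : k = 0 := Subsingleton.elim k 0
      obtain rfl : l = 0 := Subsingleton.elim l 0
      simp [resVal, bmap, affEmb, constMat, E, Matrix.mul_apply, Fin.sum_univ_one,
        Matrix.one_apply, ContinuousLinearMap.mul_apply]
end

section
/- Partial converse of the resolvent equation: let R be a unital commutative ring, B ⊂ A unital R-algebras, π = [[*, b],[*, a]]/~ ∈ Gr_1(A), b' ∈ A with b'b = 1, and f an nc function on an admissible nc set Ω over Gr(B) with values in M(A). Suppose that for each n and each β ∈ Ω ∩ M_n(B) there is c(β) ∈ GL_n(A) with f(β̃) = (b ⊗ I_n)c(β), and that f satisfies (Δ̃f)(σ;σ')(X) = −f(σ)Xf(σ') for all σ, σ' ∈ Ω, together with the initial condition f(β̃₀) = b(β₀b − a)^{-1} for some β₀ ∈ Ω ∩ B. Then Ω ∩ M(B) ⊂ ρ̃(π;B) ∩ M(B), and f(β̃) = R̃(π;B)(β̃) = (b ⊗ I_n)(β(b ⊗ I_n) − a ⊗ I_n)^{-1} for every β ∈ Ω ∩ M_n(B). -/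
open Matrix

/-- A scalar as a `1 × 1` matrix. -/
def constMat' {S : Type} (x : S) : Mat S 1 := Matrix.of fun _ _ => x

section Aux1
open Matrix

variable {S : Type} [Ring S] {n n' : ℕ}

lemma triW_mul_triW (P₁ : Mat S n) (H₁ : Matrix (Fin n) (Fin n') S) (Q₁ : Mat S n')
    (P₂ : Mat S n) (H₂ : Matrix (Fin n) (Fin n') S) (Q₂ : Mat S n') :
    triW P₁ H₁ Q₁ * triW P₂ H₂ Q₂ = triW (P₁*P₂) (P₁*H₂ + H₁*Q₂) (Q₁*Q₂) := by
  simp only [triW, Matrix.reindex_apply, Matrix.submatrix_mul_equiv,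
    Matrix.fromBlocks_multiply]
  simp

lemma triW_one : (triW 1 (0 : Matrix (Fin n) (Fin n') S) 1) = 1 := by
  simp only [triW, Matrix.fromBlocks_one]
  simp

lemma dsumW_eq_triW (P : Mat S n) (Q : Mat S n') :
    dsumW P Q = triW P 0 Q := rfl

lemma dsumMat_eq_triW (P : Mat S n) (Q : Mat S n') :
    dsumMat P Q = triW P 0 Q := rfl

lemma cornerMat_eq_triW (X : Matrix (Fin n) (Fin n') S) :
    cornerMat X = triW 0 X 0 := rfl

lemma triW_add (P₁ P₂ : Mat S n) (H₁ H₂ : Matrix (Fin n) (Fin n') S) (Q₁ Q₂ : Mat S n') :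
    triW P₁ H₁ Q₁ + triW P₂ H₂ Q₂ = triW (P₁+P₂) (H₁+H₂) (Q₁+Q₂) := by
  ext i j
  simp only [triW, Matrix.reindex_apply, Matrix.submatrix_apply, Matrix.add_apply]
  rcases (finSumFinEquiv.symm i) with i'|i' <;> rcases (finSumFinEquiv.symm j) with j'|j' <;>
    simp [Matrix.fromBlocks]

lemma triW_corner_inj {P P' : Mat S n} {H H' : Matrix (Fin n) (Fin n') S} {Q Q' : Mat S n'}
    (h : triW P H Q = triW P' H' Q') : H = H' := by
  have h2 := congrArg (fun M => (Matrix.reindex (finSumFinEquiv (m := n) (n := n')).symm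
    (finSumFinEquiv (m := n) (n := n')).symm M).toBlocks₁₂) h
  simpa only [triW, Matrix.reindex_apply, Matrix.submatrix_submatrix,
    Equiv.symm_symm, Equiv.symm_comp_self, Matrix.submatrix_id_id, Matrix.toBlocks_fromBlocks₁₂] using h2

end Aux1
section Aux2
open Matrix

variable {S T : Type} [Ring S] [Ring T] {n n' : ℕ}

lemma triW_map (g : S →+* T) (P : Mat S n) (H : Matrix (Fin n) (Fin n') S) (Q : Mat S n') :
    (triW P H Q).map g = triW (P.map g) (H.map g) (Q.map g) := by
  simp only [triW, Matrix.reindex_apply]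
  rw [← Matrix.submatrix_map, Matrix.fromBlocks_map]
  congr 1
  simp

lemma triW_diag_const (z : S) :
    triW (Matrix.diagonal fun _ : Fin n => z) 0 (Matrix.diagonal fun _ : Fin n' => z)
      = Matrix.diagonal (fun _ : Fin (n+n') => z) := by
  have : (0 : Matrix (Fin n) (Fin n') S) = 0 := rfl
  simp only [triW]
  rw [show (Matrix.fromBlocks (Matrix.diagonal fun _ : Fin n => z) 0 0
      (Matrix.diagonal fun _ : Fin n' => z)) =
      Matrix.diagonal (Sum.elim (fun _ : Fin n => z) (fun _ : Fin n' => z)) from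
    Matrix.fromBlocks_diagonal _ _]
  ext i j
  rcases eq_or_ne i j with h|h
  · subst h
    rw [Matrix.reindex_apply, Matrix.submatrix_apply, Matrix.diagonal_apply_eq,
      Matrix.diagonal_apply_eq]
    cases finSumFinEquiv.symm i <;> rfl
  · rw [Matrix.reindex_apply, Matrix.submatrix_apply, Matrix.diagonal_apply_ne _ h,
      Matrix.diagonal_apply_ne]
    exact fun hh => h (finSumFinEquiv.symm.injective hh)

lemma isUnit_oneByOne {x y : S} (h1 : x * y = 1) (h2 : y * x = 1) :
    IsUnit (Matrix.of fun _ _ : Fin 1 => x) := by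
  refine ⟨⟨_, Matrix.of fun _ _ : Fin 1 => y, ?_, ?_⟩, rfl⟩ <;> ext i j <;>
    simp [Matrix.mul_apply, h1, h2, Matrix.one_apply, Subsingleton.elim i j]

variable {R : Type} [CommRing R] [Algebra R S]

lemma map_smul_one (r : R) :
    ((r • (1 : Matrix (Fin n) (Fin n) R)).map (algebraMap R S)) = r • (1 : Mat S n) := by
  ext i j
  by_cases h : i = j <;> simp [h, Matrix.one_apply, Algebra.smul_def, Matrix.algebraMap_matrix_apply]

lemma rmulL_eq {p q r : ℕ} (s : Matrix (Fin p) (Fin q) R) (X : Matrix (Fin q) (Fin r) S) :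
    rmulL (R := R) s X = s.map (algebraMap R S) * X := by
  ext i j
  simp [rmulL, Matrix.mul_apply, Algebra.smul_def]

lemma rmulR_eq {p q r : ℕ} (X : Matrix (Fin p) (Fin q) S) (s : Matrix (Fin q) (Fin r) R) :
    rmulR (R := R) X s = X * s.map (algebraMap R S) := by
  ext i j
  simp only [rmulR, Matrix.mul_apply, Matrix.of_apply, Matrix.map_apply, Algebra.smul_def]
  exact Finset.sum_congr rfl fun k _ => (Algebra.commutes _ _)

end Aux2

section Aux3
open Matrix

variable {R : Type} [CommRing R] {A : Type} [Ring A] [Algebra R A] (D : Subalgebra R A)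
variable {n n' : ℕ}

lemma rcmap_sub (X Y : Matrix (Fin n) (Fin n') ↥D) :
    rcmap D (X - Y) = rcmap D X - rcmap D Y := by
  ext i j; simp [rcmap]

lemma rcmap_diag_const (z : ↥D) :
    rcmap D (Matrix.diagonal fun _ : Fin n => z) =
      Matrix.diagonal (fun _ : Fin n => (z : A)) := by
  ext i j
  rcases eq_or_ne i j with h|h
  · subst h; simp [rcmap]
  · simp [rcmap, Matrix.diagonal_apply_ne _ h]

end Aux3
section Aux4
open Matrix

variable {S : Type} [Ring S] {n n' : ℕ}

lemma triW_zero : triW (0 : Mat S n) (0 : Matrix (Fin n) (Fin n') S) (0 : Mat S n') = 0 := by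
  simp only [triW, Matrix.fromBlocks_zero]
  simp

lemma dsum_affEmb (x : Mat S n) (y : Mat S n') :
    dsum (affEmb x) (affEmb y) = affEmb (triW x 0 y) := by
  ext i j : 2
  fin_cases i <;> fin_cases j <;>
    simp [dsum, affEmb, dsumMat_eq_triW, triW_one, triW_zero]

lemma ins_affEmb (hd : (1:ℕ) ≤ 2) (u : Fin (2-1)) (v : Fin 1)
    (x : Mat S n) (y : Mat S n') (Z : Matrix (Fin n) (Fin n') S) :
    ins hd u v (affEmb x) (affEmb y) Z = affEmb (triW x Z y) := by
  have hu : (u : ℕ) = 0 := by omega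
  have hv : (v : ℕ) = 0 := by omega
  ext i j : 2
  fin_cases i <;> fin_cases j <;>
    simp [ins, dsum, affEmb, dsumMat_eq_triW, cornerMat_eq_triW, triW_one, triW_zero, hu, hv]
  · have h := triW_add x 0 0 Z y 0
    simp only [add_zero, zero_add] at h
    rw [← Matrix.add_apply, h]
section Aux5

variable {S : Type} [Ring S]

lemma endgame_key (c Pf Qf Wd E₀ B' Bb Aa δ'' β'' : S)
    (hkey : (-Pf) * (δ'' - β'') * Qf = Qf - Pf)
    (hB'P : B' * Pf = c) (hB'Q : B' * Qf = Wd)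
    (hQE : Qf * E₀ = Bb) (hWE : Wd * E₀ = 1) (hE₀ : E₀ = δ'' * Bb - Aa) :
    c * (β'' * Bb - Aa) = 1 := by
  have h := congrArg (fun M => B' * M * E₀) hkey
  have h : B' * ((-Pf) * (δ'' - β'') * Qf) * E₀ = B' * (Qf - Pf) * E₀ := h
  have s1 : c * ((β'' - δ'') * (Qf * E₀)) = Wd * E₀ - c * E₀ := by
    calc c * ((β'' - δ'') * (Qf * E₀))
        = (B' * Pf) * ((β'' - δ'') * (Qf * E₀)) := by rw [hB'P]
      _ = B' * ((-Pf) * (δ'' - β'') * Qf) * E₀ := by noncomm_ring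
      _ = B' * (Qf - Pf) * E₀ := by rw [h]
      _ = (B' * Qf) * E₀ - (B' * Pf) * E₀ := by noncomm_ring
      _ = Wd * E₀ - c * E₀ := by rw [hB'P, hB'Q]
  rw [hQE, hWE, hE₀] at s1
  calc c * (β'' * Bb - Aa)
      = c * ((β'' - δ'') * Bb) + c * (δ'' * Bb - Aa) := by noncomm_ring
    _ = (1 - c * (δ'' * Bb - Aa)) + c * (δ'' * Bb - Aa) := by rw [s1]
    _ = 1 := by abel

lemma right_inv_of_left {c x : S} (hcu : IsUnit c) (h : c * x = 1) : x * c = 1 := by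
  obtain ⟨u, rfl⟩ := hcu
  have hx : x = ((u⁻¹ : Sˣ) : S) := by
    calc x = 1 * x := (one_mul x).symm
      _ = (((u⁻¹ : Sˣ) : S) * u) * x := by rw [Units.inv_mul]
      _ = ((u⁻¹ : Sˣ) : S) * (↑u * x) := by rw [mul_assoc]
      _ = ((u⁻¹ : Sˣ) : S) := by rw [h, mul_one]
  rw [hx]
  exact Units.inv_mul u

end Aux5
section Aux6

lemma isUnit_2x2 {S : Type} [Ring S] (Bb Aa β' c : S)
    (key : c * (β' * Bb - Aa) = 1) (hEc : (β' * Bb - Aa) * c = 1) :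
    IsUnit !![Bb, 1; Aa, β'] := by
  refine ⟨⟨!![Bb, 1; Aa, β'], !![c * β', -c; 1 - Bb * (c * β'), Bb * c], ?_, ?_⟩, rfl⟩
  · ext i j
    fin_cases i <;> fin_cases j <;>
      simp [Matrix.mul_apply, Fin.sum_univ_two, Matrix.one_apply]
    · have h : Aa * (c * β') + β' * (1 - Bb * (c * β')) =
          β' - ((β' * Bb - Aa) * c) * β' := by noncomm_ring
      rw [h, hEc, one_mul, sub_self]
    · have h : -(Aa * c) + β' * (Bb * c) = (β' * Bb - Aa) * c := by noncomm_ring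
      rw [h, hEc]
  · ext i j
    fin_cases i <;> fin_cases j <;>
      simp [Matrix.mul_apply, Fin.sum_univ_two, Matrix.one_apply]
    · have h : c * β' * Bb + -(c * Aa) = c * (β' * Bb - Aa) := by noncomm_ring
      rw [h, key]
    · have h : (1 - Bb * (c * β')) * Bb + Bb * c * Aa =
          Bb - Bb * (c * (β' * Bb - Aa)) := by noncomm_ring
      rw [h, key, mul_one, sub_self]
    · noncomm_ring

end Aux6
set_option maxHeartbeats 1000000 in
/-- partial converse of the resolvent equation. If an nc function `f`
on an admissible nc set `Ω` over `Gr(B)` satisfies `f(β̃) = (b ⊗ I_n) c(β)` with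
`c(β)` invertible, the difference-differential equation
`(Δ̃ f)(σ;σ')(X) = - f(σ) X f(σ')`, and the initial condition
`f(β̃₀) = b (β₀ b - a)⁻¹`, then `Ω ∩ M(B) ⊆ ρ̃(π;B) ∩ M(B)` and
`f(β̃) = R̃(π;B)(β̃) = (b ⊗ I_n)(β (b ⊗ I_n) - a ⊗ I_n)⁻¹` on `Ω ∩ M(B)`. -/
theorem resolvent_converse {R : Type} [CommRing R] {A : Type} [Ring A] [Algebra R A]
    (D : Subalgebra R A) (b a b' : A) (hb'b : b' * b = 1)
    (P : BMat A 2 1) (hP : IsUnit P)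
    (hPb : P 0 1 = constMat' b) (hPa : P 1 1 = constMat' a)
    (C : ∀ n, Set (BMat (↥D) 2 n))
    (hC : IsNCSetCarrier (show (1:ℕ) ≤ 2 by norm_num) C)
    (f : ∀ n, BMat (↥D) 2 n → Mat A n)
    (hf : IsNCFun R (show (1:ℕ) ≤ 2 by norm_num) C f)
    (hadm : Admissible R (show (1:ℕ) ≤ 2 by norm_num) C
      (⟨0, by norm_num⟩ : Fin (2 - 1)) (0 : Fin 1))
    (hc : ∀ (n : ℕ) (β : Mat (↥D) n), affEmb β ∈ C n →
      ∃ cβ : Mat A n, IsUnit cβ ∧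
        f n (affEmb β) = Matrix.diagonal (fun _ => b) * cβ)
    (hres : ∀ (n n' : ℕ) (σ : BMat (↥D) 2 n) (σ' : BMat (↥D) 2 n'),
      σ ∈ C n → σ' ∈ C n' →
      ∀ (X : Matrix (Fin n) (Fin n') ↥D) (r : Rˣ),
        ins (show (1:ℕ) ≤ 2 by norm_num) (⟨0, by norm_num⟩ : Fin (2 - 1)) (0 : Fin 1)
          σ σ' ((r : R) • X) ∈ C (n + n') →
        f (n + n') (ins (show (1:ℕ) ≤ 2 by norm_num) (⟨0, by norm_num⟩ : Fin (2 - 1))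
            (0 : Fin 1) σ σ' ((r : R) • X)) =
          triW (f n σ) ((r : R) • (-(f n σ) * rcmap D X * f n' σ')) (f n' σ'))
    (β₀ : ↥D) (hβ₀ : affEmb (constMat' β₀) ∈ C 1)
    (w₀ : A) (hw₀ : ((β₀ : A) * b - a) * w₀ = 1) (hw₀' : w₀ * ((β₀ : A) * b - a) = 1)
    (hf0 : f 1 (affEmb (constMat' β₀)) = constMat' (b * w₀)) :
    ∀ (n : ℕ) (β : Mat (↥D) n), affEmb β ∈ C n →
      IsUnit (rmat (show (1:ℕ) ≤ 2 by norm_num) (ampl P n) (bmap D (affEmb β))) ∧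
      IsUnit (rcmap D β * Matrix.diagonal (fun _ => b) - Matrix.diagonal (fun _ => a)) ∧
      ∀ w : Mat A n,
        (rcmap D β * Matrix.diagonal (fun _ => b) - Matrix.diagonal (fun _ => a)) * w = 1 →
        w * (rcmap D β * Matrix.diagonal (fun _ => b) - Matrix.diagonal (fun _ => a)) = 1 →
        f n (affEmb β) = Matrix.diagonal (fun _ => b) * w := by
  -- the diagonal amplification of β₀ and its f-value
  have hdiag1 : (constMat' β₀ : Mat ↥D 1) = Matrix.diagonal (fun _ : Fin 1 => β₀) := by
    ext i j
    rw [Subsingleton.elim i j, Matrix.diagonal_apply_eq]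
    rfl
  have hdiag1' : (constMat' (b * w₀) : Mat A 1) =
      Matrix.diagonal (fun _ : Fin 1 => b * w₀) := by
    ext i j
    rw [Subsingleton.elim i j, Matrix.diagonal_apply_eq]
    rfl
  have hδ : ∀ k : ℕ, affEmb (Matrix.diagonal (fun _ : Fin (k+1) => β₀)) ∈ C (k+1) ∧
      f (k+1) (affEmb (Matrix.diagonal (fun _ : Fin (k+1) => β₀))) =
        Matrix.diagonal (fun _ : Fin (k+1) => b * w₀) := by
    intro k
    induction k with
    | zero =>
      refine ⟨?_, ?_⟩
      · rw [← hdiag1]; exact hβ₀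
      · rw [← hdiag1, hf0, hdiag1']
    | succ k ih =>
      have hsplit : (Matrix.diagonal (fun _ : Fin (k+1+1) => β₀) : Mat ↥D (k+1+1)) =
          triW (Matrix.diagonal (fun _ : Fin (k+1) => β₀)) 0
            (Matrix.diagonal (fun _ : Fin 1 => β₀)) := (triW_diag_const β₀).symm
      have hmem2 : affEmb (triW (Matrix.diagonal (fun _ : Fin (k+1) => β₀)) 0
          (Matrix.diagonal (fun _ : Fin 1 => β₀))) ∈ C (k+1+1) := by
        rw [← dsum_affEmb]
        exact hC.2.2 (k+1) 1 _ ih.1 _ (by rw [← hdiag1]; exact hβ₀)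
      refine ⟨by rw [hsplit]; exact hmem2, ?_⟩
      rw [hsplit, ← dsum_affEmb,
        hf.2.1 (k+1) 1 _ ih.1 _ (by rw [← hdiag1]; exact hβ₀), dsumW_eq_triW, ih.2,
        ← hdiag1, hf0, hdiag1', triW_diag_const]
  intro n
  match n with
  | 0 =>
    intro β hβ
    have h1 : Subsingleton (Mat A 0) := ⟨fun x y => by ext i j; exact i.elim0⟩
    have h2 : Subsingleton (BMat A 2 0) := ⟨fun x y => by ext i j k l; exact k.elim0⟩
    exact ⟨isUnit_of_subsingleton _, isUnit_of_subsingleton _,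
      fun w _ _ => Subsingleton.elim _ _⟩
  | (m+1) =>
    intro β hβ
    have hδm := (hδ m).1
    have hfδ := (hδ m).2
    have hkey : (-(f (m+1) (affEmb β))) *
        rcmap D ((Matrix.diagonal (fun _ : Fin (m+1) => β₀)) - β) *
        f (m+1) (affEmb (Matrix.diagonal (fun _ : Fin (m+1) => β₀))) =
        f (m+1) (affEmb (Matrix.diagonal (fun _ : Fin (m+1) => β₀))) -
          f (m+1) (affEmb β) := by
      set δ : Mat ↥D (m+1) := Matrix.diagonal (fun _ : Fin (m+1) => β₀) with hδdef
      obtain ⟨r, hins⟩ := hadm (m+1) (m+1) (affEmb β) (affEmb δ) (δ - β) hβ hδm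
      rw [ins_affEmb] at hins
      set sP : Matrix (Fin ((m+1)+(m+1))) (Fin ((m+1)+(m+1))) R :=
        triW 1 ((r:R) • 1) 1 with hsP
      set sM : Matrix (Fin ((m+1)+(m+1))) (Fin ((m+1)+(m+1))) R :=
        triW 1 ((-(r:R)) • 1) 1 with hsM
      have hsPM : sP * sM = 1 := by
        rw [hsP, hsM, triW_mul_triW]
        simp only [one_mul, mul_one, neg_smul, neg_add_cancel]
        exact triW_one
      have hsMP : sM * sP = 1 := by
        rw [hsP, hsM, triW_mul_triW]
        simp only [one_mul, mul_one, neg_smul, neg_add_cancel, add_neg_cancel]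
        exact triW_one
      have hSD : sP.map (algebraMap R ↥D) = triW (1 : Mat ↥D (m+1)) ((r:R) • 1) 1 := by
        rw [hsP, triW_map (algebraMap R ↥D), Matrix.map_one _ (map_zero _) (map_one _),
          map_smul_one]
      have hSS : sP.map (algebraMap R ↥D) * sM.map (algebraMap R ↥D) = 1 := by
        rw [← Matrix.map_mul, hsPM, Matrix.map_one _ (map_zero _) (map_one _)]
      have hS'S : sM.map (algebraMap R ↥D) * sP.map (algebraMap R ↥D) = 1 := by
        rw [← Matrix.map_mul, hsMP, Matrix.map_one _ (map_zero _) (map_one _)]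
      have hGamma : memH 2 1 ((m+1)+(m+1)) (by norm_num)
          (Matrix.diagonal (fun _ : Fin 2 => sP.map (algebraMap R ↥D))) := by
        refine ⟨⟨⟨Matrix.diagonal (fun _ : Fin 2 => sP.map (algebraMap R ↥D)),
          Matrix.diagonal (fun _ : Fin 2 => sM.map (algebraMap R ↥D)),
          ?_, ?_⟩, rfl⟩, ?_, ?_, ?_⟩
        · rw [Matrix.diagonal_mul_diagonal]
          simp [hSS]
        · rw [Matrix.diagonal_mul_diagonal]
          simp [hS'S]
        · intro i j hi hj
          apply Matrix.diagonal_apply_ne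
          intro hij
          rw [hij] at hi
          omega
        · have he : (Matrix.of fun i j : Fin (2-1) =>
              (Matrix.diagonal (fun _ : Fin 2 => sP.map (algebraMap R ↥D)))
                ⟨(i:ℕ), lt_of_lt_of_le i.isLt (Nat.sub_le 2 1)⟩
                ⟨(j:ℕ), lt_of_lt_of_le j.isLt (Nat.sub_le 2 1)⟩) =
              Matrix.of fun _ _ : Fin 1 => sP.map (algebraMap R ↥D) := by
            ext i j
            have hij : (⟨(i:ℕ), lt_of_lt_of_le i.isLt (Nat.sub_le 2 1)⟩ : Fin 2) =
                ⟨(j:ℕ), lt_of_lt_of_le j.isLt (Nat.sub_le 2 1)⟩ := by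
              apply Fin.ext
              have h1 := i.isLt
              have h2 := j.isLt
              simp only [Fin.val_mk]
              omega
            rw [Matrix.of_apply, Matrix.of_apply, hij, Matrix.diagonal_apply_eq]
          rw [he]
          exact isUnit_oneByOne hSS hS'S
        · have he : (Matrix.of fun i j : Fin 1 =>
              (Matrix.diagonal (fun _ : Fin 2 => sP.map (algebraMap R ↥D)))
                ⟨2 - 1 + (i:ℕ), by have := i.isLt; omega⟩
                ⟨2 - 1 + (j:ℕ), by have := j.isLt; omega⟩) =
              Matrix.of fun _ _ : Fin 1 => sP.map (algebraMap R ↥D) := by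
            ext i j
            have hij : (⟨2 - 1 + (i:ℕ), by have := i.isLt; omega⟩ : Fin 2) =
                ⟨2 - 1 + (j:ℕ), by have := j.isLt; omega⟩ := by
              apply Fin.ext
              have h1 := i.isLt
              have h2 := j.isLt
              simp only [Fin.val_mk]
              omega
            rw [Matrix.of_apply, Matrix.of_apply, hij, Matrix.diagonal_apply_eq]
          rw [he]
          exact isUnit_oneByOne hSS hS'S
      have hTS : triW β ((r:R) • (δ - β)) δ * (sP.map (algebraMap R ↥D)) =
          (sP.map (algebraMap R ↥D)) * triW β 0 δ := by
        rw [hSD, triW_mul_triW, triW_mul_triW]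
        simp only [one_mul, mul_one, zero_add]
        rw [show β * ((r:R) • (1 : Mat ↥D (m+1))) + (r:R) • (δ - β) =
            ((r:R) • (1 : Mat ↥D (m+1))) * δ from by
          rw [mul_smul_comm, mul_one, smul_mul_assoc, one_mul, smul_sub]
          abel]
      have hgrel : grel 2 1 ((m+1)+(m+1)) (by norm_num)
          (simAct sP (affEmb (triW β 0 δ))) (affEmb (triW β ((r:R) • (δ - β)) δ)) := by
        refine ⟨_, hGamma, ?_⟩
        ext i j : 2
        fin_cases i <;> fin_cases j <;>
          simp [simAct, affEmb, Matrix.mul_apply, Fin.sum_univ_two,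
            Matrix.diagonal_apply_eq, Matrix.one_apply, hTS]
      have hmemM0 : affEmb (triW β 0 δ) ∈ C ((m+1)+(m+1)) := by
        rw [← dsum_affEmb]
        exact hC.2.2 _ _ _ hβ _ hδm
      have hmemSim : simAct sP (affEmb (triW β 0 δ)) ∈ C ((m+1)+(m+1)) :=
        (hC.2.1 _ _ _ hgrel).mpr hins
      have hfres := hres (m+1) (m+1) (affEmb β) (affEmb δ) hβ hδm (δ - β) r
        (by rwa [ins_affEmb])
      rw [ins_affEmb] at hfres
      have h1 : f _ (simAct sP (affEmb (triW β 0 δ))) =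
          f _ (affEmb (triW β ((r:R) • (δ - β)) δ)) :=
        hf.1 _ _ hmemSim _ hins hgrel
      have h3 : f _ (affEmb (triW β 0 δ)) =
          dsumW (f _ (affEmb β)) (f _ (affEmb δ)) := by
        rw [← dsum_affEmb]
        exact hf.2.1 _ _ _ hβ _ hδm
      have hSDA : sP.map (algebraMap R A) = triW (1 : Mat A (m+1)) ((r:R) • 1) 1 := by
        rw [hsP, triW_map (algebraMap R A), Matrix.map_one _ (map_zero _) (map_one _),
          map_smul_one]
      have hSMA : sM.map (algebraMap R A) = triW (1 : Mat A (m+1)) ((-(r:R)) • 1) 1 := by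
        rw [hsM, triW_map (algebraMap R A), Matrix.map_one _ (map_zero _) (map_one _),
          map_smul_one]
      have h4 : rmulR (rmulL (R := R) sP
            (dsumW (f _ (affEmb β)) (f _ (affEmb δ)))) sM =
          triW (f _ (affEmb β)) ((r:R) • (f _ (affEmb δ) - f _ (affEmb β)))
            (f _ (affEmb δ)) := by
        rw [rmulL_eq, rmulR_eq, dsumW_eq_triW, hSDA, hSMA, triW_mul_triW, triW_mul_triW]
        simp only [one_mul, mul_one, zero_add]
        rw [show f (m+1) (affEmb β) * ((-(r:R)) • (1 : Mat A (m+1))) +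
            ((r:R) • (1 : Mat A (m+1))) * f (m+1) (affEmb δ) =
            (r:R) • (f (m+1) (affEmb δ) - f (m+1) (affEmb β)) from by
          rw [mul_smul_comm, mul_one, smul_mul_assoc, one_mul, smul_sub, neg_smul]
          abel]
      have h2 := hf.2.2 ((m+1)+(m+1)) ⟨sP, sM, hsPM, hsMP⟩ _ hmemM0 hmemSim
      have hch : triW (f _ (affEmb β))
            ((r:R) • (-(f _ (affEmb β)) * rcmap D (δ - β) * f _ (affEmb δ)))
            (f _ (affEmb δ)) =
          triW (f _ (affEmb β)) ((r:R) • (f _ (affEmb δ) - f _ (affEmb β)))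
            (f _ (affEmb δ)) := by
        calc triW (f _ (affEmb β))
              ((r:R) • (-(f _ (affEmb β)) * rcmap D (δ - β) * f _ (affEmb δ)))
              (f _ (affEmb δ))
            = f _ (affEmb (triW β ((r:R) • (δ - β)) δ)) := hfres.symm
          _ = f _ (simAct sP (affEmb (triW β 0 δ))) := h1.symm
          _ = rmulR (rmulL (R := R) sP (f _ (affEmb (triW β 0 δ)))) sM := h2
          _ = triW (f _ (affEmb β)) ((r:R) • (f _ (affEmb δ) - f _ (affEmb β)))
              (f _ (affEmb δ)) := by rw [h3, h4]
      have hcor := triW_corner_inj hch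
      have hcan := congrArg (fun M => (((r⁻¹ : Rˣ) : R)) • M) hcor
      simp only [smul_smul, Units.inv_mul, one_smul] at hcan
      exact hcan
    obtain ⟨c, hcu, hPc⟩ := hc (m+1) β hβ
    have hrc : rcmap D ((Matrix.diagonal fun _ : Fin (m+1) => β₀) - β) =
        Matrix.diagonal (fun _ : Fin (m+1) => (β₀:A)) - rcmap D β := by
      rw [rcmap_sub, rcmap_diag_const]
    rw [hrc] at hkey
    have key : c * (rcmap D β * Matrix.diagonal (fun _ : Fin (m+1) => b) -
        Matrix.diagonal (fun _ => a)) = 1 := by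
      refine endgame_key c _ _ (Matrix.diagonal fun _ => w₀)
        (Matrix.diagonal fun _ => (β₀:A) * b - a) (Matrix.diagonal fun _ => b')
        _ _ _ _ hkey ?_ ?_ ?_ ?_ ?_
      · rw [hPc, ← mul_assoc, Matrix.diagonal_mul_diagonal]
        simp [hb'b]
      · rw [hfδ, Matrix.diagonal_mul_diagonal]
        congr 1
        funext i
        rw [← mul_assoc, hb'b, one_mul]
      · rw [hfδ, Matrix.diagonal_mul_diagonal]
        congr 1
        funext i
        rw [mul_assoc, hw₀', mul_one]
      · rw [Matrix.diagonal_mul_diagonal]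
        simp [hw₀']
      · rw [Matrix.diagonal_mul_diagonal, Matrix.diagonal_sub]
    have hEc := right_inv_of_left hcu key
    refine ⟨?_, ⟨⟨_, c, hEc, key⟩, rfl⟩, ?_⟩
    · have hrm : rmat (show (1:ℕ) ≤ 2 by norm_num) (ampl P (m+1)) (bmap D (affEmb β)) =
          !![Matrix.diagonal (fun _ : Fin (m+1) => b), 1;
             Matrix.diagonal (fun _ : Fin (m+1) => a), rcmap D β] := by
        ext i j : 2
        fin_cases i <;> fin_cases j <;>
          simp [rmat, ampl, bmap, affEmb, rcmap, hPb, hPa, constMat']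
        rw [Matrix.one_apply, Matrix.one_apply]
        split <;> simp
      rw [hrm]
      exact isUnit_2x2 _ _ _ c key hEc
    · intro w hw1 hw2
      have hwc : w = c := by
        calc w = 1 * w := (one_mul w).symm
          _ = (c * (rcmap D β * Matrix.diagonal (fun _ => b) -
              Matrix.diagonal (fun _ => a))) * w := by rw [key]
          _ = c * ((rcmap D β * Matrix.diagonal (fun _ => b) -
              Matrix.diagonal (fun _ => a)) * w) := by rw [mul_assoc]
          _ = c * 1 := by rw [hw1]
          _ = c := mul_one c
      rw [hwc]
      exact hPc
end Aux4
end
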